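/- Let A be the complex 4 × 2 matrix A = (1/(2·3^{1/4})) · [[√(√3+1), (1−i)/√(√3+1)], [√(√3+1), (−1+i)/√(√3+1)], [√(√3−1), (1+i)/√(√3−1)], [√(√3−1), (−1−i)/√(√3−1)]]. Then A has orthonormal columns: AᴴA = I₂. -/

import Mathlib

open Matrix Complex

/-- The complex `4 × 2` matrix
`A = (1/(2·3^{1/4})) · [[√(√3+1), (1−i)/√(√3+1)], [√(√3+1), (−1+i)/√(√3+1)],
[√(√3−1), (1+i)/√(√3−1)], [√(√3−1), (−1−i)/√(√3−1)]]`. -/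
noncomputable def tetraMatrix : Matrix (Fin 4) (Fin 2) ℂ :=
  ((1 / (2 * Real.sqrt (Real.sqrt 3)) : ℝ) : ℂ) •
    !![(Real.sqrt (Real.sqrt 3 + 1) : ℂ),
         (1 - Complex.I) / (Real.sqrt (Real.sqrt 3 + 1) : ℂ);
       (Real.sqrt (Real.sqrt 3 + 1) : ℂ),
         (-1 + Complex.I) / (Real.sqrt (Real.sqrt 3 + 1) : ℂ);
       (Real.sqrt (Real.sqrt 3 - 1) : ℂ),
         (1 + Complex.I) / (Real.sqrt (Real.sqrt 3 - 1) : ℂ);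
       (Real.sqrt (Real.sqrt 3 - 1) : ℂ),
         (-1 - Complex.I) / (Real.sqrt (Real.sqrt 3 - 1) : ℂ)]

set_option maxHeartbeats 2000000 in
/-- The matrix `tetraMatrix` has orthonormal columns: `Aᴴ * A = 1`. -/
theorem tetraMatrix_orthonormal_columns : tetraMatrixᴴ * tetraMatrix = 1 := by
  have hs : (0:ℝ) < Real.sqrt 3 := Real.sqrt_pos.mpr (by norm_num)
  have hs1 : (1:ℝ) < Real.sqrt 3 := by
    nlinarith [Real.sq_sqrt (by norm_num : (0:ℝ) ≤ 3)]
  have ht : (0:ℝ) < Real.sqrt (Real.sqrt 3) := Real.sqrt_pos.mpr hs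
  have ha : (0:ℝ) < Real.sqrt (Real.sqrt 3 + 1) := Real.sqrt_pos.mpr (by linarith)
  have hb : (0:ℝ) < Real.sqrt (Real.sqrt 3 - 1) := Real.sqrt_pos.mpr (by linarith)
  have ha' : ((Real.sqrt (Real.sqrt 3 + 1) : ℝ) : ℂ) ≠ 0 := by exact_mod_cast ha.ne'
  have hb' : ((Real.sqrt (Real.sqrt 3 - 1) : ℝ) : ℂ) ≠ 0 := by exact_mod_cast hb.ne'
  have ht' : ((Real.sqrt (Real.sqrt 3) : ℝ) : ℂ) ≠ 0 := by exact_mod_cast ht.ne'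
  have ha2' : ((Real.sqrt (Real.sqrt 3 + 1) : ℝ) : ℂ) ^ 2 = (Real.sqrt 3 : ℂ) + 1 := by
    exact_mod_cast Real.sq_sqrt (by linarith : (0:ℝ) ≤ Real.sqrt 3 + 1)
  have hb2' : ((Real.sqrt (Real.sqrt 3 - 1) : ℝ) : ℂ) ^ 2 = (Real.sqrt 3 : ℂ) - 1 := by
    exact_mod_cast Real.sq_sqrt (by linarith : (0:ℝ) ≤ Real.sqrt 3 - 1)
  have ht2' : ((Real.sqrt (Real.sqrt 3) : ℝ) : ℂ) ^ 2 = (Real.sqrt 3 : ℂ) := by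
    exact_mod_cast Real.sq_sqrt hs.le
  have hsq' : ((Real.sqrt 3 : ℝ) : ℂ) ^ 2 = 3 := by
    exact_mod_cast Real.sq_sqrt (by norm_num : (0:ℝ) ≤ 3)
  ext i j
  fin_cases i <;> fin_cases j <;>
    simp [tetraMatrix, Matrix.mul_apply, Fin.sum_univ_four, Matrix.conjTranspose_apply,
      Matrix.one_apply, map_div₀, Matrix.vecHead, Matrix.vecTail, map_ofNat] <;>
    field_simp
  · linear_combination (2:ℂ) * ha2' + 2 * hb2' - 4 * ht2'
  · ring
  · ring
  · linear_combination (-2 * (((Real.sqrt (Real.sqrt 3 + 1) : ℂ)) ^ 2 + ((Real.sqrt (Real.sqrt 3 - 1) : ℂ)) ^ 2)) * Complex.I_sq +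
      (4 - 4 * (Real.sqrt 3 : ℂ) * ((Real.sqrt (Real.sqrt 3 - 1) : ℂ)) ^ 2) * ha2' +
      (4 - 4 * (Real.sqrt 3 : ℂ) * ((Real.sqrt 3 : ℂ) + 1)) * hb2' -
      4 * ((Real.sqrt (Real.sqrt 3 + 1) : ℂ)) ^ 2 * ((Real.sqrt (Real.sqrt 3 - 1) : ℂ)) ^ 2 * ht2' -
      4 * (Real.sqrt 3 : ℂ) * hsq'
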